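/- arXiv:1504.01775 — 8 statements merged into one kernel-verified Lean document; each statement's English description precedes it below -/
import Mathlib

section
/- Let α ∈ ℂ with α ≠ 0 and let φ_α(z) = exp(2πiz/α). If T ⊆ ℂ is compact, T is equal to the closure of its interior, and |z₁ − z₂| < |α| for all z₁, z₂ ∈ T, then the image φ_α(T) is a tile: φ_α(T) is compact and φ_α(T) equals the closure of its interior. -/
/-- The conformal map `φ_α(z) = exp(2πiz/α)`. -/
noncomputable def phi (α z : ℂ) : ℂ := Complex.exp (2 * (Real.pi : ℂ) * Complex.I * z / α)

lemma phi_eq (α : ℂ) : phi α = fun z => Complex.exp ((2 * (Real.pi : ℂ) * Complex.I / α) * z) := by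
  funext z
  simp only [phi]
  ring_nf

lemma continuous_phi (α : ℂ) : Continuous (phi α) := by
  rw [phi_eq]
  exact Complex.continuous_exp.comp (continuous_const.mul continuous_id)

lemma isOpenMap_phi (α : ℂ) (hα : α ≠ 0) : IsOpenMap (phi α) := by
  rw [phi_eq]
  have hc : (2 * (Real.pi : ℂ) * Complex.I / α) ≠ 0 := by
    apply div_ne_zero _ hα
    simp [Real.pi_ne_zero, Complex.I_ne_zero, Complex.ext_iff, Real.pi_ne_zero]
  exact Complex.isOpenMap_exp.comp (Homeomorph.mulLeft₀ _ hc).isOpenMap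

/-- If `T` is a tile (compact and the closure of its interior) whose points are pairwise at
distance less than `|α|`, then `φ_α(T)` is a tile. -/
theorem stmt2 (α : ℂ) (hα : α ≠ 0) (T : Set ℂ) (hTc : IsCompact T)
    (hTcl : T = closure (interior T))
    (hTd : ∀ z₁ ∈ T, ∀ z₂ ∈ T, ‖z₁ - z₂‖ < ‖α‖) :
    IsCompact (phi α '' T) ∧ phi α '' T = closure (interior (phi α '' T)) := by
  have hcont := continuous_phi α
  have hcomp : IsCompact (phi α '' T) := hTc.image hcont
  refine ⟨hcomp, le_antisymm ?_ ?_⟩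
  · -- φ''T ⊆ closure (interior (φ''T))
    have hopen : IsOpen (phi α '' interior T) := isOpenMap_phi α hα _ isOpen_interior
    have hsub : phi α '' interior T ⊆ interior (phi α '' T) :=
      hopen.subset_interior_iff.mpr (Set.image_mono interior_subset)
    calc phi α '' T = phi α '' closure (interior T) := by rw [← hTcl]
      _ ⊆ closure (phi α '' interior T) := image_closure_subset_closure_image hcont
      _ ⊆ closure (interior (phi α '' T)) := closure_mono hsub
  · exact closure_minimal interior_subset hcomp.isClosed
end

section
/- Let α ∈ ℂ with α ≠ 0 and let φ_α(z) = exp(2πiz/α). Let 𝒯 be a collection of subsets of ℂ such that: (i) the union of all T ∈ 𝒯 is ℂ; (ii) for distinct T₁, T₂ ∈ 𝒯 the interiors of T₁ and T₂ are disjoint; (iii) for every T ∈ 𝒯 and every k ∈ ℤ, the translate T + kα belongs to 𝒯. Then the family 𝒮_α = {φ_α(T) : T ∈ 𝒯} is a packing and covering of ℂ \ {0} in the following sense: the union of all sets φ_α(T) for T ∈ 𝒯 equals ℂ \ {0}, and for any T₁, T₂ ∈ 𝒯, if there exist z₁ in the interior of T₁ and z₂ in the interior of T₂ with φ_α(z₁)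 = φ_α(z₂), then φ_α(T₁) = φ_α(T₂). -/
lemma phi_translate (α : ℂ) (hα : α ≠ 0) (k : ℤ) (z : ℂ) :
    phi α (z + (k : ℂ) * α) = phi α z := by
  unfold phi
  rw [Complex.exp_eq_exp_iff_exists_int]
  exact ⟨k, by field_simp⟩

/-- If `𝒯` is a tiling of `ℂ` (covering with pairwise disjoint interiors) invariant under
translation by integer multiples of `α`, then the family `{φ_α(T) : T ∈ 𝒯}` is a
packing and covering of `ℂ \ {0}`. -/
theorem stmt3 (α : ℂ) (hα : α ≠ 0) (𝒯 : Set (Set ℂ))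
    (hcover : ⋃₀ 𝒯 = Set.univ)
    (hpack : ∀ T₁ ∈ 𝒯, ∀ T₂ ∈ 𝒯, T₁ ≠ T₂ → interior T₁ ∩ interior T₂ = ∅)
    (htrans : ∀ T ∈ 𝒯, ∀ k : ℤ, (fun z => z + (k : ℂ) * α) '' T ∈ 𝒯) :
    (⋃ T ∈ 𝒯, phi α '' T) = ({0}ᶜ : Set ℂ) ∧
    ∀ T₁ ∈ 𝒯, ∀ T₂ ∈ 𝒯,
      (∃ z₁ ∈ interior T₁, ∃ z₂ ∈ interior T₂, phi α z₁ = phi α z₂) →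
      phi α '' T₁ = phi α '' T₂ := by
  constructor
  · ext w
    simp only [Set.mem_iUnion, Set.mem_compl_iff, Set.mem_singleton_iff]
    constructor
    · rintro ⟨T, hT, z, hz, rfl⟩
      exact Complex.exp_ne_zero _
    · intro hw
      set z := Complex.log w * α / (2 * (Real.pi : ℂ) * Complex.I)
      have hz : phi α z = w := by
        unfold phi
        rw [← Complex.exp_log hw]
        congr 1
        have h2 : (2 * (Real.pi : ℂ) * Complex.I) ≠ 0 := by
          simp [Real.pi_ne_zero, Complex.I_ne_zero]
        field_simp [z]
        show 2 * (Real.pi : ℂ) * Complex.I * (Complex.log w * α / (2 * (Real.pi : ℂ) * Complex.I)) = α * Complex.log w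
        field_simp
      have : z ∈ ⋃₀ 𝒯 := by rw [hcover]; trivial
      obtain ⟨T, hT, hzT⟩ := this
      exact ⟨T, hT, z, hzT, hz⟩
  · rintro T₁ hT₁ T₂ hT₂ ⟨z₁, hz₁, z₂, hz₂, heq⟩
    have h2 : (2 * (Real.pi : ℂ) * Complex.I) ≠ 0 := by
      simp [Real.pi_ne_zero, Complex.I_ne_zero]
    obtain ⟨n, hn⟩ := Complex.exp_eq_exp_iff_exists_int.mp heq
    have hz : z₁ = z₂ + (n : ℂ) * α := by
      field_simp at hn
      have : 2 * (Real.pi:ℂ) * Complex.I * z₁ = 2 * (Real.pi:ℂ) * Complex.I * (z₂ + (n:ℂ) * α) := by linear_combination (2 * (Real.pi:ℂ) * Complex.I) * hn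
      exact mul_left_cancel₀ h2 this
    set T₂' := (fun z => z + (n : ℂ) * α) '' T₂ with hT₂'def
    have hT₂' : T₂' ∈ 𝒯 := htrans T₂ hT₂ n
    have himg : phi α '' T₂' = phi α '' T₂ := by
      rw [hT₂'def, Set.image_image]
      exact Set.image_congr fun x _ => phi_translate α hα n x
    have hz₁' : z₁ ∈ interior T₂' := by
      have : T₂' = (Homeomorph.addRight ((n : ℂ) * α)) '' T₂ := rfl
      rw [this, ← Homeomorph.image_interior]
      exact ⟨z₂, hz₂, hz.symm⟩
    by_cases hTT : T₁ = T₂'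
    · rw [hTT, himg]
    · have := hpack T₁ hT₁ T₂' hT₂' hTT
      exact absurd (Set.mem_inter hz₁ hz₁') (by rw [this]; exact fun h => h)
end

section
/- Let ℤ[i] = {a + bi : a, b ∈ ℤ} ⊆ ℂ, let α = L + Ri ∈ ℤ[i] with (L, R) ≠ (0, 0), and let n = gcd(L, R). Let 𝒯 be the (4⁴) tiling of ℂ, i.e. 𝒯 = {T_p : p ∈ ℤ[i]} where T_p = {z ∈ ℂ : |Re(z − p)| ≤ 1/2 and |Im(z − p)| ≤ 1/2} is the closed unit square centered at p. Then the rotation g₁(z) = exp(2πi/n)·z leaves the family 𝒮_α = {φ_α(T) : T ∈ 𝒯} invariant: {g₁(S) : S ∈ 𝒮_α} = 𝒮_α, where φ_α(z) = exp(2πiz/α). -/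
/-- The closed unit square centered at `p`. -/
def Tsq (p : ℂ) : Set ℂ := {z : ℂ | |(z - p).re| ≤ 1 / 2 ∧ |(z - p).im| ≤ 1 / 2}

/-- The `(4⁴)` tiling of `ℂ`: closed unit squares centered at the Gaussian integers. -/
def sqTiling : Set (Set ℂ) := {S | ∃ a b : ℤ, S = Tsq ((a : ℂ) + (b : ℂ) * Complex.I)}

lemma Tsq_translate (p c : ℂ) : (fun z => z + c) '' Tsq p = Tsq (p + c) := by
  ext w
  simp only [Set.mem_image, Tsq, Set.mem_setOf_eq]
  constructor
  · rintro ⟨z, hz, rfl⟩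
    rwa [show z + c - (p + c) = z - p by ring] at *
  · intro hw
    exact ⟨w - c, by rwa [show w - c - p = w - (p + c) by ring], by ring⟩

/-- For `α = L + Ri` a nonzero Gaussian integer and `n = gcd(L, R)`, the rotation
`g₁(z) = exp(2πi/n)·z` leaves the family `𝒮_α = {φ_α(T) : T ∈ 𝒯}` invariant, where `𝒯`
is the `(4⁴)` tiling. -/
theorem stmt6 (L R : ℤ) (hLR : ¬(L = 0 ∧ R = 0)) (α : ℂ)
    (hα : α = (L : ℂ) + (R : ℂ) * Complex.I) (n : ℕ) (hn : n = Int.gcd L R) :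
    (Set.image fun z => Complex.exp (2 * (Real.pi : ℂ) * Complex.I / (n : ℂ)) * z) ''
        ((Set.image (phi α)) '' sqTiling) = (Set.image (phi α)) '' sqTiling := by
  have hn0 : n ≠ 0 := by
    rw [hn]
    simp only [ne_eq, Int.gcd_eq_zero_iff]
    tauto
  have hnC : (n : ℂ) ≠ 0 := Nat.cast_ne_zero.mpr hn0
  obtain ⟨L', hL'⟩ : (n : ℤ) ∣ L := hn ▸ Int.gcd_dvd_left L R
  obtain ⟨R', hR'⟩ : (n : ℤ) ∣ R := hn ▸ Int.gcd_dvd_right L R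
  have hα0 : α ≠ 0 := by
    rw [hα]
    intro h
    apply hLR
    constructor
    · have := congrArg Complex.re h
      simp at this
      exact_mod_cast this
    · have := congrArg Complex.im h
      simp at this
      exact_mod_cast this
  set c : ℂ := (L' : ℂ) + (R' : ℂ) * Complex.I with hc
  have hnc : (n : ℂ) * c = α := by
    rw [hα, hL', hR', hc]
    push_cast
    ring
  have hcomp : ∀ z, Complex.exp (2 * (Real.pi : ℂ) * Complex.I / (n : ℂ)) * phi α z
      = phi α (z + c) := by
    intro z
    have hca : c / α = 1 / (n : ℂ) := by
      rw [div_eq_div_iff hα0 hnC, one_mul, mul_comm, hnc]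
    rw [phi, phi, ← Complex.exp_add]
    congr 1
    rw [show 2 * (Real.pi : ℂ) * Complex.I * (z + c) / α
        = 2 * (Real.pi : ℂ) * Complex.I * z / α + 2 * (Real.pi : ℂ) * Complex.I * (c / α) by
      ring, hca]
    ring
  have key : ∀ p, (fun z => Complex.exp (2 * (Real.pi : ℂ) * Complex.I / (n : ℂ)) * z) ''
      (phi α '' Tsq p) = phi α '' Tsq (p + c) := by
    intro p
    rw [← Set.image_comp, ← Tsq_translate p c, ← Set.image_comp]
    exact Set.image_congr fun z _ => hcomp z
  ext S
  simp only [Set.mem_image, sqTiling, Set.mem_setOf_eq]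
  constructor
  · rintro ⟨_, ⟨T, ⟨a, b, rfl⟩, rfl⟩, rfl⟩
    refine ⟨Tsq (((a + L' : ℤ) : ℂ) + ((b + R' : ℤ) : ℂ) * Complex.I), ⟨a + L', b + R', rfl⟩, ?_⟩
    rw [key, hc]
    push_cast
    ring_nf
  · rintro ⟨_, ⟨a, b, rfl⟩, rfl⟩
    refine ⟨phi α '' Tsq (((a - L' : ℤ) : ℂ) + ((b - R' : ℤ) : ℂ) * Complex.I),
      ⟨Tsq _, ⟨a - L', b - R', rfl⟩, rfl⟩, ?_⟩
    rw [key, hc]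
    push_cast
    ring_nf
end

section
/- Let ℤ[i] = {a + bi : a, b ∈ ℤ} ⊆ ℂ and let α ∈ ℤ[i] \ {0} be balanced, i.e. α = u · conj(α) for some unit u ∈ {1, i, −1, −i}. Let 𝒯 = {T_p : p ∈ ℤ[i]} be the (4⁴) tiling of ℂ by closed unit squares T_p centered at the Gaussian integers p. Then complex conjugation g₂(z) = conj(z) leaves the family 𝒮_α = {φ_α(T) : T ∈ 𝒯} invariant: {conj(S) : S ∈ 𝒮_α} = 𝒮_α, where φ_α(z) = exp(2πiz/α). -/
private lemma sq_mem (c : ℂ) (hc : c = 1 ∨ c = Complex.I ∨ c = -1 ∨ c = -Complex.I)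
    (p z : ℂ) : z ∈ Tsq p ↔ c * (starRingEnd ℂ) z ∈ Tsq (c * (starRingEnd ℂ) p) := by
  have h : c * (starRingEnd ℂ) z - c * (starRingEnd ℂ) p
      = c * (starRingEnd ℂ) (z - p) := by rw [map_sub]; ring
  simp only [Tsq, Set.mem_setOf_eq, h]
  rcases hc with rfl | rfl | rfl | rfl <;>
    simp [Complex.mul_re, Complex.mul_im, abs_neg, neg_add_eq_sub, abs_sub_comm, and_comm]

private lemma psi_invol (c : ℂ) (hc : c = 1 ∨ c = Complex.I ∨ c = -1 ∨ c = -Complex.I)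
    (z : ℂ) : c * (starRingEnd ℂ) (c * (starRingEnd ℂ) z) = z := by
  rw [map_mul, Complex.conj_conj]
  have h : c * (starRingEnd ℂ) c = 1 := by
    rcases hc with rfl | rfl | rfl | rfl <;> simp [Complex.conj_I]
  calc c * ((starRingEnd ℂ) c * z) = (c * (starRingEnd ℂ) c) * z := by ring
    _ = z := by rw [h, one_mul]

private lemma sq_image (c : ℂ) (hc : c = 1 ∨ c = Complex.I ∨ c = -1 ∨ c = -Complex.I)
    (p : ℂ) :
    (fun z => c * (starRingEnd ℂ) z) '' Tsq p = Tsq (c * (starRingEnd ℂ) p) := by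
  ext w
  constructor
  · rintro ⟨z, hz, rfl⟩
    exact (sq_mem c hc p z).mp hz
  · intro hw
    refine ⟨c * (starRingEnd ℂ) w, ?_, psi_invol c hc w⟩
    have := (sq_mem c hc (c * (starRingEnd ℂ) p) w).mp hw
    rwa [psi_invol c hc p] at this

/-- If `α` is a nonzero balanced Gaussian integer, then complex conjugation leaves the
family `𝒮_α = {φ_α(T) : T ∈ 𝒯}` invariant, where `𝒯` is the `(4⁴)` tiling. -/
theorem stmt7 (α : ℂ) (hα : α ≠ 0) (hαZ : ∃ a b : ℤ, α = (a : ℂ) + (b : ℂ) * Complex.I)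
    (hbal : ∃ u ∈ ({1, Complex.I, -1, -Complex.I} : Set ℂ), α = u * (starRingEnd ℂ) α) :
    (Set.image fun z => (starRingEnd ℂ) z) '' ((Set.image (phi α)) '' sqTiling)
      = (Set.image (phi α)) '' sqTiling := by
  obtain ⟨u, hu, hbal⟩ := hbal
  simp only [Set.mem_insert_iff, Set.mem_singleton_iff] at hu
  set c : ℂ := -u with hc_def
  have hc : c = 1 ∨ c = Complex.I ∨ c = -1 ∨ c = -Complex.I := by
    rcases hu with rfl | rfl | rfl | rfl
    · right; right; left; simp [hc_def]
    · right; right; right; simp [hc_def]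
    · left; simp [hc_def]
    · right; left; simp [hc_def]
  have hαconj : (starRingEnd ℂ) α ≠ 0 := by
    simpa using hα
  -- key pointwise identity: conj ∘ phi α = phi α ∘ (fun z => c * conj z)
  have huu : u * (starRingEnd ℂ) u = 1 := by
    rcases hu with rfl | rfl | rfl | rfl <;> simp [Complex.conj_I]
  have hu0 : (starRingEnd ℂ) u ≠ 0 := by
    intro h
    rw [h, mul_zero] at huu
    exact one_ne_zero huu.symm
  have hbar : (starRingEnd ℂ) α = (starRingEnd ℂ) u * α := by
    conv_lhs => rw [hbal]
    rw [map_mul, Complex.conj_conj]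
  have hphi : ∀ z : ℂ, (starRingEnd ℂ) (phi α z) = phi α (c * (starRingEnd ℂ) z) := by
    intro z
    rw [phi, phi, ← Complex.exp_conj]
    congr 1
    rw [map_div₀, map_mul, map_mul, map_mul, hbar]
    simp only [Complex.conj_I, map_ofNat, Complex.conj_ofReal, hc_def]
    field_simp
    linear_combination ((starRingEnd ℂ) z) * huu
  have himg : ∀ p : ℂ,
      (fun z => (starRingEnd ℂ) z) '' (phi α '' Tsq p)
        = phi α '' Tsq (c * (starRingEnd ℂ) p) := by
    intro p
    rw [← sq_image c hc p, Set.image_image, Set.image_image]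
    exact Set.image_congr' hphi
  -- Gaussian integers are closed under the map p ↦ c * conj p
  have hgauss : ∀ a b : ℤ, ∃ a' b' : ℤ,
      c * (starRingEnd ℂ) ((a : ℂ) + (b : ℂ) * Complex.I)
        = (a' : ℂ) + (b' : ℂ) * Complex.I := by
    intro a b
    have hconj : (starRingEnd ℂ) ((a : ℂ) + (b : ℂ) * Complex.I)
        = (a : ℂ) - (b : ℂ) * Complex.I := by
      rw [map_add, map_mul, Complex.conj_I, map_intCast, map_intCast]; ring
    rcases hc with h1 | h1 | h1 | h1
    · exact ⟨a, -b, by rw [h1, hconj]; push_cast; ring⟩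
    · exact ⟨b, a, by
        rw [h1, hconj]; push_cast; linear_combination (-(b:ℂ)) * Complex.I_sq⟩
    · exact ⟨-a, b, by rw [h1, hconj]; push_cast; ring⟩
    · exact ⟨-b, -a, by
        rw [h1, hconj]; push_cast; linear_combination ((b:ℂ)) * Complex.I_sq⟩
  ext S
  simp only [Set.mem_image, sqTiling, Set.mem_setOf_eq]
  constructor
  · rintro ⟨T, ⟨T', ⟨a, b, rfl⟩, rfl⟩, rfl⟩
    obtain ⟨a', b', h'⟩ := hgauss a b
    exact ⟨Tsq ((a' : ℂ) + (b' : ℂ) * Complex.I), ⟨a', b', rfl⟩, by rw [← h', ← himg]⟩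
  · rintro ⟨T, ⟨a, b, rfl⟩, rfl⟩
    obtain ⟨a', b', h'⟩ := hgauss a b
    refine ⟨phi α '' Tsq ((a' : ℂ) + (b' : ℂ) * Complex.I),
      ⟨Tsq ((a' : ℂ) + (b' : ℂ) * Complex.I), ⟨a', b', rfl⟩, rfl⟩, ?_⟩
    rw [himg, ← h', psi_invol c hc]
end

section
/- Let ℤ[i] = {a + bi : a, b ∈ ℤ} ⊆ ℂ, let α ∈ ℤ[i] \ {0}, and let φ_α(z) = exp(2πiz/α). For p ∈ ℤ[i], let T_p = {z ∈ ℂ : |Re(z − p)| ≤ 1/2 and |Im(z − p)| ≤ 1/2} be the closed unit square centered at p. Then for all p, q ∈ ℤ[i]: φ_α(T_p) = φ_α(T_q) if and only if φ_α(p) = φ_α(q) (equivalently, if and only if q = p + kα for some k ∈ ℤ). In particular the map sending the image of a tile under φ_α to the image of its center under φ_α is a well-defined bijection between {φ_α(T_p) : p ∈ ℤ[i]} and {φ_α(p) : p ∈ ℤ[i]}. -/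
/-- The Gaussian integers, viewed as a subset of `ℂ`. -/
def ZI : Set ℂ := {z : ℂ | ∃ a b : ℤ, z = (a : ℂ) + (b : ℂ) * Complex.I}

lemma two_pi_I_ne : (2 * (Real.pi : ℂ) * Complex.I : ℂ) ≠ 0 := by
  simp [Real.pi_ne_zero, Complex.I_ne_zero, Complex.ofReal_ne_zero]

lemma phi_eq_iff (α : ℂ) (hα : α ≠ 0) (z w : ℂ) :
    phi α z = phi α w ↔ ∃ k : ℤ, w = z + (k : ℂ) * α := by
  rw [phi, phi, Complex.exp_eq_exp_iff_exists_int]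
  constructor
  · rintro ⟨n, hn⟩
    have hz : 2 * (Real.pi : ℂ) * Complex.I * z
        = 2 * (Real.pi : ℂ) * Complex.I * (w + n * α) := by
      field_simp at hn; linear_combination (2 * (Real.pi : ℂ) * Complex.I) * hn
    have h := mul_left_cancel₀ two_pi_I_ne hz
    exact ⟨-n, by push_cast; linear_combination -h⟩
  · rintro ⟨k, rfl⟩
    exact ⟨-k, by push_cast; field_simp; ring⟩

lemma zi_sub {x y : ℂ} (hx : x ∈ ZI) (hy : y ∈ ZI) : x - y ∈ ZI := by
  obtain ⟨a, b, rfl⟩ := hx; obtain ⟨c, d, rfl⟩ := hy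
  exact ⟨a - c, b - d, by push_cast; ring⟩

lemma zi_intmul (k : ℤ) {x : ℂ} (hx : x ∈ ZI) : (k : ℂ) * x ∈ ZI := by
  obtain ⟨a, b, rfl⟩ := hx
  exact ⟨k * a, k * b, by push_cast; ring⟩

lemma zi_small {v : ℂ} (hv : v ∈ ZI) (h1 : |v.re| ≤ 1 / 2) (h2 : |v.im| ≤ 1 / 2) : v = 0 := by
  obtain ⟨a, b, rfl⟩ := hv
  have hre : ((a : ℂ) + (b : ℂ) * Complex.I).re = (a : ℝ) := by simp
  have him : ((a : ℂ) + (b : ℂ) * Complex.I).im = (b : ℝ) := by simp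
  rw [hre] at h1; rw [him] at h2
  have ha : a = 0 := Int.abs_lt_one_iff.mp (by exact_mod_cast (by linarith : |(a : ℝ)| < 1))
  have hb : b = 0 := Int.abs_lt_one_iff.mp (by exact_mod_cast (by linarith : |(b : ℝ)| < 1))
  simp [ha, hb]

lemma img_eq (α : ℂ) (hα : α ≠ 0) (p : ℂ) (k : ℤ) :
    phi α '' Tsq (p + (k : ℂ) * α) = phi α '' Tsq p := by
  ext w
  simp only [Set.mem_image]
  constructor
  · rintro ⟨z, hz, rfl⟩
    refine ⟨z - (k : ℂ) * α, ?_, ?_⟩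
    · have h3 : z - (k : ℂ) * α - p = z - (p + (k : ℂ) * α) := by ring
      simp only [Tsq, Set.mem_setOf_eq, h3]
      exact hz
    · exact (phi_eq_iff α hα (z - (k : ℂ) * α) z).mpr ⟨k, by ring⟩
  · rintro ⟨z, hz, rfl⟩
    refine ⟨z + (k : ℂ) * α, ?_, ?_⟩
    · have h3 : z + (k : ℂ) * α - (p + (k : ℂ) * α) = z - p := by ring
      simp only [Tsq, Set.mem_setOf_eq, h3]
      exact hz
    · exact (phi_eq_iff α hα (z + (k : ℂ) * α) z).mpr ⟨-k, by push_cast; ring⟩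

lemma key (α : ℂ) (hα : α ≠ 0) (hαZ : α ∈ ZI) :
    ∀ p ∈ ZI, ∀ q ∈ ZI,
      (phi α '' Tsq p = phi α '' Tsq q ↔ phi α p = phi α q) ∧
      (phi α p = phi α q ↔ ∃ k : ℤ, q = p + (k : ℂ) * α) := by
  intro p hp q hq
  have iff2 := phi_eq_iff α hα p q
  refine ⟨⟨?_, ?_⟩, iff2⟩
  · intro h
    have hqq : q ∈ Tsq q := by simp [Tsq]
    have : phi α q ∈ phi α '' Tsq p := by rw [h]; exact ⟨q, hqq, rfl⟩
    obtain ⟨z, hz, hphi⟩ := this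
    obtain ⟨k, hk⟩ := (phi_eq_iff α hα z q).mp hphi
    have hzZ : z ∈ ZI := by
      have : z = q - (k : ℂ) * α := by rw [hk]; ring
      rw [this]; exact zi_sub hq (zi_intmul k hαZ)
    have hzp : z - p = 0 := zi_small (zi_sub hzZ hp) hz.1 hz.2
    have hzp' : z = p := by linear_combination hzp
    exact iff2.mpr ⟨k, by rw [hk, hzp']⟩
  · intro h
    obtain ⟨k, hk⟩ := iff2.mp h
    rw [hk]
    exact (img_eq α hα p k).symm


/-- For a nonzero Gaussian integer `α` and Gaussian integers `p, q`:
`φ_α(T_p) = φ_α(T_q)` iff `φ_α(p) = φ_α(q)` iff `q = p + kα` for some `k ∈ ℤ`.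
In particular, sending the image of a tile under `φ_α` to the image of its center under
`φ_α` gives a well-defined bijection `{φ_α(T_p) : p ∈ ℤ[i]} → {φ_α(p) : p ∈ ℤ[i]}`. -/
theorem stmt8 (α : ℂ) (hα : α ≠ 0) (hαZ : α ∈ ZI) :
    (∀ p ∈ ZI, ∀ q ∈ ZI,
      (phi α '' Tsq p = phi α '' Tsq q ↔ phi α p = phi α q) ∧
      (phi α p = phi α q ↔ ∃ k : ℤ, q = p + (k : ℂ) * α)) ∧
    ∃ σ : Set ℂ → ℂ, (∀ p ∈ ZI, σ (phi α '' Tsq p) = phi α p) ∧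
      Set.BijOn σ {S : Set ℂ | ∃ p ∈ ZI, S = phi α '' Tsq p}
        {w : ℂ | ∃ p ∈ ZI, w = phi α p} := by
  refine ⟨key α hα hαZ, ?_⟩
  classical
  refine ⟨fun S => if h : ∃ p ∈ ZI, S = phi α '' Tsq p then phi α h.choose else 0, ?_, ?_⟩
  case _ =>
    intro p hp
    have hex : ∃ r ∈ ZI, phi α '' Tsq p = phi α '' Tsq r := ⟨p, hp, rfl⟩
    dsimp only
    rw [dif_pos hex]
    obtain ⟨hrZ, hre⟩ := hex.choose_spec
    exact (key α hα hαZ hex.choose hrZ p hp).1.mp hre.symm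
  case _ =>
    have hσ : ∀ p ∈ ZI,
        (if h : ∃ r ∈ ZI, phi α '' Tsq p = phi α '' Tsq r then phi α h.choose else 0)
          = phi α p := by
      intro p hp
      have hex : ∃ r ∈ ZI, phi α '' Tsq p = phi α '' Tsq r := ⟨p, hp, rfl⟩
      rw [dif_pos hex]
      obtain ⟨hrZ, hre⟩ := hex.choose_spec
      exact (key α hα hαZ hex.choose hrZ p hp).1.mp hre.symm
    refine ⟨?_, ?_, ?_⟩
    · rintro S ⟨p, hp, rfl⟩
      dsimp only
      rw [hσ p hp]
      exact ⟨p, hp, rfl⟩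
    · rintro S ⟨p, hp, rfl⟩ T ⟨q, hq, rfl⟩ he
      dsimp only at he
      rw [hσ p hp, hσ q hq] at he
      exact (key α hα hαZ p hp q hq).1.mpr he
    · rintro w ⟨p, hp, rfl⟩
      exact ⟨phi α '' Tsq p, ⟨p, hp, rfl⟩, by dsimp only; exact hσ p hp⟩
end

section
/- Let ω = exp(2πi/3) and ℤ[ω] = {a + bω : a, b ∈ ℤ} ⊆ ℂ. Let α = L + Rω ∈ ℤ[ω] with (L, R) ≠ (0, 0), let n = gcd(L, R), and let Q_α = {φ_α(t) : t ∈ ℤ[ω]} where φ_α(z) = exp(2πiz/α). Then exp(2πi/n)·Q_α = Q_α; moreover, if α is balanced in ℤ[ω] (i.e. α = u·conj(α) for some unit u ∈ {±1, ±ω, ±ω²}), then also conj(Q_α) = Q_α. -/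
/-- The primitive cube root of unity `ω = exp(2πi/3)`. -/
noncomputable def ω : ℂ := Complex.exp (2 * (Real.pi : ℂ) * Complex.I / 3)

/-- The Eisenstein integers `ℤ[ω]`, viewed as a subset of `ℂ`. -/
noncomputable def ZW : Set ℂ := {z : ℂ | ∃ a b : ℤ, z = (a : ℂ) + (b : ℂ) * ω}

lemma omega_eq : ω = Complex.exp (((2*Real.pi/3 : ℝ) : ℂ) * Complex.I) := by
  rw [ω]; congr 1; push_cast; ring

lemma omega_im : ω.im = Real.sin (2*Real.pi/3) := by
  rw [omega_eq, Complex.exp_ofReal_mul_I_im]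

lemma omega_im_ne : ω.im ≠ 0 := by
  rw [omega_im]
  have h := Real.pi_pos
  apply ne_of_gt
  apply Real.sin_pos_of_pos_of_lt_pi <;> nlinarith

lemma omega_ne_one : ω ≠ 1 := by
  intro h
  apply omega_im_ne
  rw [h]; simp

lemma omega_cube : ω ^ 3 = 1 := by
  rw [ω, ← Complex.exp_nat_mul]
  push_cast
  rw [show (3:ℂ) * (2 * (Real.pi : ℂ) * Complex.I / 3) = 2 * Real.pi * Complex.I from by ring,
    Complex.exp_two_pi_mul_I]

lemma omega_sq : ω ^ 2 = -1 - ω := by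
  have h : (ω - 1) * (ω ^ 2 + ω + 1) = 0 := by
    have := omega_cube; linear_combination this - 1
  rcases mul_eq_zero.mp h with h1 | h2
  · exact absurd (sub_eq_zero.mp h1) omega_ne_one
  · linear_combination h2

lemma omega_ne_zero : ω ≠ 0 := by rw [ω]; exact Complex.exp_ne_zero _

lemma omega_conj : (starRingEnd ℂ) ω = ω ^ 2 := by
  have h1 : (starRingEnd ℂ) ω * ω = 1 := by
    rw [ω, ← Complex.exp_conj, ← Complex.exp_add]
    have h : (starRingEnd ℂ) (2 * (Real.pi : ℂ) * Complex.I / 3) + 2 * (Real.pi : ℂ) * Complex.I / 3 = 0 := by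
      rw [map_div₀, map_mul, map_mul]
      simp only [Complex.conj_I, Complex.conj_ofReal, map_ofNat]
      ring
    rw [h, Complex.exp_zero]
  have h2 : ω ^ 2 * ω = 1 := by rw [← pow_succ]; exact omega_cube
  exact mul_right_cancel₀ omega_ne_zero (h1.trans h2.symm)

lemma ZW_mul {x y : ℂ} (hx : x ∈ ZW) (hy : y ∈ ZW) : x * y ∈ ZW := by
  obtain ⟨a, b, rfl⟩ := hx
  obtain ⟨c, d, rfl⟩ := hy
  exact ⟨a*c - b*d, a*d + b*c - b*d, by push_cast; linear_combination (b:ℂ)*(d:ℂ)*omega_sq⟩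

lemma ZW_conj {x : ℂ} (hx : x ∈ ZW) : (starRingEnd ℂ) x ∈ ZW := by
  obtain ⟨a, b, rfl⟩ := hx
  refine ⟨a - b, -b, ?_⟩
  rw [map_add, map_mul, map_intCast, map_intCast, omega_conj, omega_sq]
  push_cast
  ring


/-- For `α = L + Rω` a nonzero Eisenstein integer, `n = gcd(L, R)` and
`Q_α = φ_α(ℤ[ω])`, the rotation by `exp(2πi/n)` leaves `Q_α` invariant; and if moreover
`α` is balanced, then conjugation leaves `Q_α` invariant. -/
theorem stmt9 (L R : ℤ) (hLR : ¬(L = 0 ∧ R = 0)) (α : ℂ)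
    (hα : α = (L : ℂ) + (R : ℂ) * ω) (n : ℕ) (hn : n = Int.gcd L R)
    (Q : Set ℂ) (hQ : Q = phi α '' ZW) :
    (fun w => Complex.exp (2 * (Real.pi : ℂ) * Complex.I / (n : ℂ)) * w) '' Q = Q ∧
    ((∃ u ∈ ({1, -1, ω, -ω, ω ^ 2, -ω ^ 2} : Set ℂ), α = u * (starRingEnd ℂ) α) →
      (starRingEnd ℂ) '' Q = Q) := by
  have hα0 : α ≠ 0 := by
    intro h
    rw [hα] at h
    have him : (R : ℝ) * ω.im = 0 := by
      have := congrArg Complex.im h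
      simpa [Complex.add_im, Complex.mul_im] using this
    have hR : R = 0 := by
      have := mul_eq_zero.mp him
      rcases this with h' | h'
      · exact_mod_cast h'
      · exact absurd h' omega_im_ne
    subst hR
    have hL : L = 0 := by
      have := congrArg Complex.re h
      simpa using this
    exact hLR ⟨hL, rfl⟩
  have hnz : n ≠ 0 := by
    rw [hn]
    intro h
    rcases Int.gcd_eq_zero_iff.mp h with ⟨h1, h2⟩
    exact hLR ⟨h1, h2⟩
  have hn0 : (n : ℂ) ≠ 0 := Nat.cast_ne_zero.mpr hnz
  obtain ⟨L', hL'⟩ : (n : ℤ) ∣ L := hn ▸ Int.gcd_dvd_left L R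
  obtain ⟨R', hR'⟩ : (n : ℤ) ∣ R := hn ▸ Int.gcd_dvd_right L R
  have hαn : α / (n : ℂ) = (L' : ℂ) + (R' : ℂ) * ω := by
    rw [hα, hL', hR']
    field_simp
    push_cast
    ring
  constructor
  · ext w
    simp only [Set.mem_image, hQ]
    constructor
    · rintro ⟨x, ⟨t, ht, rfl⟩, rfl⟩
      obtain ⟨a, b, rfl⟩ := ht
      refine ⟨((a:ℂ) + (b:ℂ)*ω) + α/(n:ℂ), ⟨a + L', b + R', by rw [hαn]; push_cast; ring⟩, ?_⟩
      rw [phi, phi, ← Complex.exp_add]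
      congr 1
      field_simp
      ring
    · rintro ⟨t, ht, rfl⟩
      obtain ⟨a, b, rfl⟩ := ht
      refine ⟨phi α (((a:ℂ) + (b:ℂ)*ω) - α/(n:ℂ)), ⟨_, ⟨a - L', b - R', by rw [hαn]; push_cast; ring⟩, rfl⟩, ?_⟩
      rw [phi, phi, ← Complex.exp_add]
      congr 1
      field_simp
      ring
  · rintro ⟨u, hu, hbal⟩
    have hcα : (starRingEnd ℂ) α ≠ 0 := by
      simpa using hα0
    have hu' : -u ∈ ZW := by
      simp only [Set.mem_insert_iff, Set.mem_singleton_iff] at hu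
      rcases hu with rfl | rfl | rfl | rfl | rfl | rfl
      · exact ⟨-1, 0, by push_cast; ring⟩
      · exact ⟨1, 0, by push_cast; ring⟩
      · exact ⟨0, -1, by push_cast; ring⟩
      · exact ⟨0, 1, by push_cast; ring⟩
      · exact ⟨1, 1, by push_cast; linear_combination -omega_sq⟩
      · exact ⟨-1, -1, by push_cast; linear_combination omega_sq⟩
    have key : ∀ x ∈ Q, (starRingEnd ℂ) x ∈ Q := by
      rintro x hx
      rw [hQ] at hx ⊢
      obtain ⟨t, ht, rfl⟩ := hx
      refine ⟨-u * (starRingEnd ℂ) t, ZW_mul hu' (ZW_conj ht), ?_⟩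
      rw [phi, phi, ← Complex.exp_conj]
      congr 1
      rw [map_div₀, map_mul, map_mul, map_mul]
      simp only [Complex.conj_I, Complex.conj_ofReal, map_ofNat]
      field_simp
      linear_combination (starRingEnd ℂ) t * hbal
    ext w
    constructor
    · rintro ⟨x, hx, rfl⟩
      exact key x hx
    · intro hw
      exact ⟨(starRingEnd ℂ) w, key w hw, Complex.conj_conj w⟩
end

section
/- Let α ∈ ℂ \ {0} and φ_α(z) = exp(2πiz/α). Let Γ be an additive subgroup of ℂ with α ∈ Γ, and let P ⊆ ℂ be a nonempty set with P + α = P. For t ∈ P write C(t) = (t + Γ) ∩ P for its color class. Let f : ℂ → ℂ be a bijection with f(P) = P, and let g : ℂ \ {0} → ℂ \ {0} be a bijection with g(φ_α(z)) = φ_α(f(z)) for all z ∈ ℂ. Then the following are equivalent: (i) for every t ∈ P there exists t′ ∈ P with f(C(t)) = C(t′); (ii) for every t ∈ P there exists t′ ∈ P with g(φ_α(C(t))) = φ_α(C(t′)). That is, g is a color symmetry of the image coloring if and only if f is a color symmetry of the coloring of P. -/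
/-- Let `Γ` be an additive subgroup of `ℂ` with `α ∈ Γ` (compatibility), let `P` be a
nonempty set with `P + α = P`, with color classes `C(t) = (t + Γ) ∩ P`.  Let `f` be a
bijection of `ℂ` with `f(P) = P`, and `g` a bijection of `ℂ \ {0}` with
`g ∘ φ_α = φ_α ∘ f`.  Then `f` permutes the color classes of `P` if and only if `g`
permutes their images under `φ_α`. -/
theorem stmt16 (α : ℂ) (hα : α ≠ 0) (Γ : AddSubgroup ℂ) (hαΓ : α ∈ Γ)
    (P : Set ℂ) (hP : P.Nonempty) (hPα : (fun z => z + α) '' P = P)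
    (f : ℂ → ℂ) (hf : Function.Bijective f) (hfP : f '' P = P)
    (g : ℂ → ℂ) (hg : Set.BijOn g ({0}ᶜ : Set ℂ) ({0}ᶜ : Set ℂ))
    (hcomm : ∀ z : ℂ, g (phi α z) = phi α (f z)) :
    (∀ t ∈ P, ∃ t' ∈ P,
        f '' ({z : ℂ | z - t ∈ Γ} ∩ P) = {z : ℂ | z - t' ∈ Γ} ∩ P) ↔
    (∀ t ∈ P, ∃ t' ∈ P,
        g '' (phi α '' ({z : ℂ | z - t ∈ Γ} ∩ P)) =
          phi α '' ({z : ℂ | z - t' ∈ Γ} ∩ P)) := by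
  -- basic facts
  have hphi_ne : ∀ z : ℂ, phi α z ≠ 0 := fun z => Complex.exp_ne_zero _
  have hexp : ∀ z w : ℂ, phi α z = phi α w ↔ ∃ n : ℤ, z = w + n * α := by
    intro z w
    unfold phi
    rw [Complex.exp_eq_exp_iff_exists_int]
    have hc : (2 * (Real.pi : ℂ) * Complex.I) ≠ 0 := by
      simp [Real.pi_ne_zero, Complex.I_ne_zero]
    constructor
    · rintro ⟨n, h⟩
      refine ⟨n, mul_left_cancel₀ hc ?_⟩
      field_simp at h
      linear_combination (2 * (Real.pi : ℂ) * Complex.I) * h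
    · rintro ⟨n, h⟩
      refine ⟨n, ?_⟩
      field_simp [h]
      linear_combination h
  -- P is saturated under integer multiples of α
  have hPstep : ∀ z : ℂ, z ∈ P ↔ z + α ∈ P := by
    intro z
    constructor
    · intro hz; rw [← hPα]; exact ⟨z, hz, rfl⟩
    · intro hz
      rw [← hPα] at hz
      obtain ⟨w, hw, hwz⟩ := hz
      have : w = z := by
        have := hwz; simpa using add_right_cancel this
      rwa [← this]
  have hPn : ∀ (n : ℤ) (z : ℂ), z ∈ P → z + n * α ∈ P := by
    intro n
    induction n using Int.induction_on with
    | zero => intro z hz; simpa using hz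
    | succ k ih =>
        intro z hz
        have h1 := (hPstep _).1 (ih z hz)
        push_cast at h1 ⊢
        have e : z + ((k : ℂ) + 1) * α = z + (k : ℂ) * α + α := by ring
        rw [e]; exact h1
    | pred k ih =>
        intro z hz
        have h1 := ih z hz
        push_cast at h1 ⊢
        refine (hPstep _).2 ?_
        have e : z + (-(k : ℂ) - 1) * α + α = z + -(k : ℂ) * α := by ring
        rw [e]; exact h1
  -- color classes
  set C : ℂ → Set ℂ := fun t => {z : ℂ | z - t ∈ Γ} ∩ P with hC
  have hsat : ∀ (t : ℂ) (n : ℤ) (z : ℂ), z ∈ C t → z + n * α ∈ C t := by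
    intro t n z ⟨hzΓ, hzP⟩
    refine ⟨?_, hPn n z hzP⟩
    have hnα : (n : ℂ) * α ∈ Γ := by
      have := AddSubgroup.zsmul_mem Γ hαΓ n
      simpa [zsmul_eq_mul] using this
    show z + n * α - t ∈ Γ
    have : z + n * α - t = (z - t) + n * α := by ring
    rw [this]
    exact Γ.add_mem hzΓ hnα
  -- f preserves the equivalence relation in both directions
  have hfrel : ∀ z w : ℂ, (∃ n : ℤ, z = w + n * α) ↔ (∃ n : ℤ, f z = f w + n * α) := by
    intro z w
    rw [← hexp, ← hexp]
    constructor
    · intro h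
      have := hcomm z
      rw [h, hcomm w] at this
      exact this.symm ▸ this
    · intro h
      have h1 : g (phi α z) = g (phi α w) := by rw [hcomm z, hcomm w, h]
      exact hg.injOn (hphi_ne z) (hphi_ne w) h1
  -- image under g ∘ phi equals phi of image under f
  have himg : ∀ S : Set ℂ, g '' (phi α '' S) = phi α '' (f '' S) := by
    intro S
    rw [← Set.image_comp, ← Set.image_comp]
    apply Set.image_congr'
    intro x
    exact hcomm x
  -- key: f '' C t = C t'  ↔  phi '' (f '' C t) = phi '' C t'
  have hkey : ∀ t t' : ℂ, (f '' C t = C t') ↔ (phi α '' (f '' C t) = phi α '' (C t')) := by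
    intro t t'
    constructor
    · intro h; rw [h]
    · intro h
      ext z
      constructor
      · rintro ⟨u, hu, rfl⟩
        have hz : phi α (f u) ∈ phi α '' (C t') := by
          rw [← h]; exact ⟨f u, ⟨u, hu, rfl⟩, rfl⟩
        obtain ⟨w, hw, hwz⟩ := hz
        obtain ⟨n, hn⟩ := (hexp (f u) w).1 hwz.symm
        rw [hn]
        exact hsat t' n w hw
      · intro hz
        have hz' : phi α z ∈ phi α '' (f '' C t) := by
          rw [h]; exact ⟨z, hz, rfl⟩
        obtain ⟨y, ⟨u, hu, rfl⟩, hyz⟩ := hz'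
        obtain ⟨n, hn⟩ := (hexp z (f u)).1 hyz.symm
        obtain ⟨v, hv⟩ := hf.surjective z
        have : ∃ m : ℤ, f v = f u + m * α := ⟨n, by rw [hv, hn]⟩
        obtain ⟨m, hm⟩ := (hfrel v u).2 this
        have hvC : v ∈ C t := by
          rw [hm]; exact hsat t m u hu
        exact ⟨v, hvC, hv⟩
  constructor
  · intro h t ht
    obtain ⟨t', ht', heq⟩ := h t ht
    exact ⟨t', ht', by rw [himg, (hkey t t').1 heq]⟩
  · intro h t ht
    obtain ⟨t', ht', heq⟩ := h t ht
    rw [himg] at heq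
    exact ⟨t', ht', (hkey t t').2 heq⟩
end

section
/- Let ℤ[i] = {a + bi : a, b ∈ ℤ} ⊆ ℂ, let β ∈ ℤ[i] \ {0}, let α = L + Ri ∈ ℤ[i] \ {0} with β dividing α in ℤ[i], and let n = gcd(L, R). Let φ_α(z) = exp(2πiz/α). Then the rotation g₁(z) = exp(2πi/n)·z permutes the image color classes: for every t ∈ ℤ[i] there exists t′ ∈ ℤ[i] such that g₁(φ_α(t + βℤ[i])) = φ_α(t′ + βℤ[i]). -/
/-- Let `α = L + Ri` be a nonzero Gaussian integer, `β` a nonzero Gaussian integer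
dividing `α`, and `n = gcd(L, R)`.  Then the rotation `g₁(z) = exp(2πi/n)·z` permutes
the images under `φ_α` of the cosets `t + βℤ[i]`. -/
theorem stmt17 (L R : ℤ) (α : ℂ) (hα : α = (L : ℂ) + (R : ℂ) * Complex.I) (hα0 : α ≠ 0)
    (β : ℂ) (hβZ : β ∈ ZI) (hβ0 : β ≠ 0) (hdvd : ∃ c ∈ ZI, α = β * c)
    (n : ℕ) (hn : n = Int.gcd L R) :
    ∀ t ∈ ZI, ∃ t' ∈ ZI,
      (fun w => Complex.exp (2 * (Real.pi : ℂ) * Complex.I / (n : ℂ)) * w) ''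
          (phi α '' {z : ℂ | ∃ c ∈ ZI, z = t + β * c}) =
        phi α '' {z : ℂ | ∃ c ∈ ZI, z = t' + β * c} := by
  -- n ≠ 0
  have hn0 : (n : ℂ) ≠ 0 := by
    intro h
    have hnz : n = 0 := by exact_mod_cast h
    have : L = 0 ∧ R = 0 := Int.gcd_eq_zero_iff.mp (by omega)
    apply hα0
    rw [hα, this.1, this.2]; simp
  -- divisibility of L, R by n
  have hLn : (n : ℤ) ∣ L := hn ▸ Int.gcd_dvd_left L R
  have hRn : (n : ℤ) ∣ R := hn ▸ Int.gcd_dvd_right L R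
  obtain ⟨l, hl⟩ := hLn
  obtain ⟨r, hr⟩ := hRn
  have hαn : α / (n : ℂ) = (l : ℂ) + (r : ℂ) * Complex.I := by
    rw [hα, hl, hr]
    push_cast
    field_simp
  -- key identity
  have key : ∀ z : ℂ,
      Complex.exp (2 * (Real.pi : ℂ) * Complex.I / (n : ℂ)) * phi α z
        = phi α (z + α / (n : ℂ)) := by
    intro z
    unfold phi
    rw [← Complex.exp_add]
    congr 1
    field_simp
    ring
  intro t ht
  refine ⟨t + α / (n : ℂ), ?_, ?_⟩
  · obtain ⟨a, b, rfl⟩ := ht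
    refine ⟨a + l, b + r, ?_⟩
    rw [hαn]; push_cast; ring
  · ext w
    simp only [Set.mem_image, Set.mem_setOf_eq]
    constructor
    · rintro ⟨_, ⟨z, ⟨c, hc, rfl⟩, rfl⟩, rfl⟩
      exact ⟨t + α / (n : ℂ) + β * c, ⟨c, hc, rfl⟩, by rw [key]; ring_nf⟩
    · rintro ⟨z, ⟨c, hc, rfl⟩, rfl⟩
      exact ⟨phi α (t + β * c), ⟨t + β * c, ⟨c, hc, rfl⟩, rfl⟩,
        by rw [key]; ring_nf⟩
end
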